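/- Let a < b. A univariate real polynomial p of even degree 2d is nonnegative on the interval [a,b] if and only if it can be written p(x) = s(x) + (x−a)(b−x)t(x) where s and t are sums of squares of polynomials with deg s ≤ 2d and deg t ≤ 2d−2. -/

import Mathlib

open Polynomial

/-- A polynomial is a sum of squares of polynomials. -/
def IsSumOfSquaresPoly (s : Polynomial ℝ) : Prop :=
  ∃ (k : ℕ) (q : Fin k → Polynomial ℝ), s = ∑ i, (q i) ^ 2

namespace ML

lemma sos_indexed {ι : Type} [Fintype ι] (f : ι → Polynomial ℝ) :
    IsSumOfSquaresPoly (∑ i, f i ^ 2) := by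
  classical
  refine ⟨Fintype.card ι, fun j => f ((Fintype.equivFin ι).symm j), ?_⟩
  exact (Equiv.sum_comp (Fintype.equivFin ι).symm (fun i => f i ^ 2)).symm

lemma sos_zero : IsSumOfSquaresPoly 0 := ⟨0, ![], by simp⟩

lemma sos_sq (f : Polynomial ℝ) : IsSumOfSquaresPoly (f ^ 2) := ⟨1, ![f], by simp⟩

lemma sos_add {s t : Polynomial ℝ} (hs : IsSumOfSquaresPoly s) (ht : IsSumOfSquaresPoly t) :
    IsSumOfSquaresPoly (s + t) := by
  obtain ⟨k1, q1, rfl⟩ := hs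
  obtain ⟨k2, q2, rfl⟩ := ht
  refine ⟨k1 + k2, Fin.addCases q1 q2, ?_⟩
  rw [Fin.sum_univ_add]
  simp

lemma sos_mul {s t : Polynomial ℝ} (hs : IsSumOfSquaresPoly s) (ht : IsSumOfSquaresPoly t) :
    IsSumOfSquaresPoly (s * t) := by
  obtain ⟨k1, q1, rfl⟩ := hs
  obtain ⟨k2, q2, rfl⟩ := ht
  have : (∑ i, q1 i ^ 2) * (∑ j, q2 j ^ 2) = ∑ p : Fin k1 × Fin k2, (q1 p.1 * q2 p.2) ^ 2 := by
    rw [Finset.sum_mul_sum, Fintype.sum_prod_type]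
    simp [mul_pow]
  rw [this]
  exact sos_indexed _

lemma sos_const {c : ℝ} (hc : 0 ≤ c) : IsSumOfSquaresPoly (C c) :=
  ⟨1, ![C (Real.sqrt c)], by simp [← map_pow, Real.sq_sqrt hc]⟩

lemma sos_sq_mul (f : Polynomial ℝ) {s : Polynomial ℝ} (hs : IsSumOfSquaresPoly s) :
    IsSumOfSquaresPoly (f ^ 2 * s) := sos_mul (sos_sq f) hs

lemma sos_eval_nonneg {s : Polynomial ℝ} (hs : IsSumOfSquaresPoly s) (x : ℝ) :
    0 ≤ s.eval x := by
  obtain ⟨k, q, rfl⟩ := hs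
  rw [eval_finset_sum]
  exact Finset.sum_nonneg fun i _ => by simp [sq_nonneg]



def Rep (a b : ℝ) (n : ℕ) (p : Polynomial ℝ) : Prop :=
  ∃ s t : Polynomial ℝ, IsSumOfSquaresPoly s ∧ IsSumOfSquaresPoly t ∧ s.natDegree ≤ n ∧
    (t = 0 ∨ t.natDegree + 2 ≤ n) ∧ p = s + (X - C a) * (C b - X) * t

def ORep (a b : ℝ) (n : ℕ) (p : Polynomial ℝ) : Prop :=
  ∃ u v : Polynomial ℝ, IsSumOfSquaresPoly u ∧ IsSumOfSquaresPoly v ∧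
    u.natDegree + 1 ≤ n ∧ v.natDegree + 1 ≤ n ∧ p = (X - C a) * u + (C b - X) * v

lemma natDegree_C_sub_X (b : ℝ) : (C b - X).natDegree = 1 := by
  have h : C b - X = -(X - C b) := by ring
  rw [h, natDegree_neg, natDegree_X_sub_C]

lemma natDegree_W_le (a b : ℝ) : ((X - C a) * (C b - X)).natDegree ≤ 2 := by
  refine le_trans (natDegree_mul_le) ?_
  rw [natDegree_X_sub_C, natDegree_C_sub_X]

lemma rep_mul_rep {a b : ℝ} {m n : ℕ} {p q : Polynomial ℝ}
    (hp : Rep a b m p) (hq : Rep a b n q) : Rep a b (m + n) (p * q) := by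
  obtain ⟨s1, t1, hs1, ht1, hds1, hdt1, rfl⟩ := hp
  obtain ⟨s2, t2, hs2, ht2, hds2, hdt2, rfl⟩ := hq
  refine ⟨s1 * s2 + ((X - C a) * (C b - X)) ^ 2 * (t1 * t2), s1 * t2 + s2 * t1,
    sos_add (sos_mul hs1 hs2) (sos_sq_mul _ (sos_mul ht1 ht2)),
    sos_add (sos_mul hs1 ht2) (sos_mul hs2 ht1), ?_, ?_, by ring⟩
  · refine le_trans (natDegree_add_le _ _) (max_le ?_ ?_)
    · exact le_trans natDegree_mul_le (add_le_add hds1 hds2)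
    · rcases hdt1 with h1 | h1
      · simp [h1]
      · rcases hdt2 with h2 | h2
        · simp [h2]
        · refine le_trans natDegree_mul_le ?_
          have hW2 : (((X - C a) * (C b - X)) ^ 2).natDegree ≤ 4 := by
            rw [natDegree_pow]
            have := natDegree_W_le a b
            omega
          have := natDegree_mul_le (p := t1) (q := t2)
          omega
  · rcases hdt1 with h1 | h1
    · rcases hdt2 with h2 | h2
      · left; simp [h1, h2]
      · right
        have hb : (s1 * t2 + s2 * t1).natDegree ≤ s1.natDegree + t2.natDegree := by
          simp only [h1, mul_zero, add_zero]
          exact natDegree_mul_le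
        omega
    · rcases hdt2 with h2 | h2
      · right
        have hb : (s1 * t2 + s2 * t1).natDegree ≤ s2.natDegree + t1.natDegree := by
          simp only [h2, mul_zero, zero_add]
          exact natDegree_mul_le
        omega
      · right
        have hb := natDegree_add_le (s1 * t2) (s2 * t1)
        have h3 := natDegree_mul_le (p := s1) (q := t2)
        have h4 := natDegree_mul_le (p := s2) (q := t1)
        omega

lemma orep_mul_orep {a b : ℝ} {m n : ℕ} {p q : Polynomial ℝ}
    (hp : ORep a b m p) (hq : ORep a b n q) : Rep a b (m + n) (p * q) := by
  obtain ⟨u1, v1, hu1, hv1, hdu1, hdv1, rfl⟩ := hp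
  obtain ⟨u2, v2, hu2, hv2, hdu2, hdv2, rfl⟩ := hq
  refine ⟨(X - C a) ^ 2 * (u1 * u2) + (C b - X) ^ 2 * (v1 * v2), u1 * v2 + u2 * v1,
    sos_add (sos_sq_mul _ (sos_mul hu1 hu2)) (sos_sq_mul _ (sos_mul hv1 hv2)),
    sos_add (sos_mul hu1 hv2) (sos_mul hu2 hv1), ?_, ?_, by ring⟩
  · refine le_trans (natDegree_add_le _ _) (max_le ?_ ?_)
    · refine le_trans natDegree_mul_le ?_
      have h1 : ((X - C a : Polynomial ℝ) ^ 2).natDegree = 2 := by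
        rw [natDegree_pow, natDegree_X_sub_C]
      have h2 := natDegree_mul_le (p := u1) (q := u2)
      omega
    · refine le_trans natDegree_mul_le ?_
      have h1 : ((C b - X : Polynomial ℝ) ^ 2).natDegree = 2 := by
        rw [natDegree_pow, natDegree_C_sub_X]
      have h2 := natDegree_mul_le (p := v1) (q := v2)
      omega
  · right
    have hb := natDegree_add_le (u1 * v2) (u2 * v1)
    have h3 := natDegree_mul_le (p := u1) (q := v2)
    have h4 := natDegree_mul_le (p := u2) (q := v1)
    omega

lemma rep_mul_orep {a b : ℝ} {m n : ℕ} {p q : Polynomial ℝ}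
    (hp : Rep a b m p) (hq : ORep a b n q) : ORep a b (m + n) (p * q) := by
  obtain ⟨s, t, hs, ht, hds, hdt, rfl⟩ := hp
  obtain ⟨u, v, hu, hv, hdu, hdv, rfl⟩ := hq
  refine ⟨s * u + (C b - X) ^ 2 * (t * v), s * v + (X - C a) ^ 2 * (t * u),
    sos_add (sos_mul hs hu) (sos_sq_mul _ (sos_mul ht hv)),
    sos_add (sos_mul hs hv) (sos_sq_mul _ (sos_mul ht hu)), ?_, ?_, by ring⟩
  · refine le_trans (Nat.add_le_add_right (natDegree_add_le _ _) 1) ?_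
    have h3 := natDegree_mul_le (p := s) (q := u)
    rcases hdt with h1 | h1
    · simp only [h1, mul_zero, zero_mul, natDegree_zero, Nat.max_zero]
      omega
    · have h4 : ((C b - X) ^ 2 * (t * v)).natDegree ≤ 2 + (t.natDegree + v.natDegree) := by
        refine le_trans natDegree_mul_le ?_
        have h5 : ((C b - X : Polynomial ℝ) ^ 2).natDegree = 2 := by
          rw [natDegree_pow, natDegree_C_sub_X]
        have h6 := natDegree_mul_le (p := t) (q := v)
        omega
      omega
  · refine le_trans (Nat.add_le_add_right (natDegree_add_le _ _) 1) ?_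
    have h3 := natDegree_mul_le (p := s) (q := v)
    rcases hdt with h1 | h1
    · simp only [h1, mul_zero, zero_mul, natDegree_zero, Nat.max_zero]
      omega
    · have h4 : ((X - C a) ^ 2 * (t * u)).natDegree ≤ 2 + (t.natDegree + u.natDegree) := by
        refine le_trans natDegree_mul_le ?_
        have h5 : ((X - C a : Polynomial ℝ) ^ 2).natDegree = 2 := by
          rw [natDegree_pow, natDegree_X_sub_C]
        have h6 := natDegree_mul_le (p := t) (q := u)
        omega
      omega

lemma rep_const {a b c : ℝ} (hc : 0 ≤ c) (n : ℕ) : Rep a b n (C c) :=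
  ⟨C c, 0, sos_const hc, sos_zero, by simp, Or.inl rfl, by ring⟩

lemma rep_sq {a b : ℝ} {k : ℕ} {f : Polynomial ℝ} (h : f.natDegree ≤ k) :
    Rep a b (2 * k) (f ^ 2) :=
  ⟨f ^ 2, 0, sos_sq f, sos_zero, by rw [natDegree_pow]; omega, Or.inl rfl, by ring⟩

lemma sos_one : IsSumOfSquaresPoly (1 : Polynomial ℝ) := by
  simpa using sos_sq 1

lemma orep_Xa (a b : ℝ) : ORep a b 1 (X - C a) :=
  ⟨1, 0, sos_one, sos_zero, by simp, by simp, by ring⟩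

lemma orep_bX (a b : ℝ) : ORep a b 1 (C b - X) :=
  ⟨0, 1, sos_zero, sos_one, by simp, by simp, by ring⟩

lemma lin_decomp {a b l m r : ℝ} (h1 : l - m = 1) (h2 : m * b - l * a = -r) :
    X - C r = (X - C a) * C l + (C b - X) * C m := by
  have h : (X - C a) * C l + (C b - X) * C m = C (l - m) * X + C (m * b - l * a) := by
    simp only [C_sub, C_mul]; ring
  rw [h, h1, h2, map_one, map_neg, one_mul]
  ring

lemma orep_lin_left {a b r : ℝ} (hab : a < b) (hr : r < a) : ORep a b 1 (X - C r) := by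
  have hba : (0:ℝ) < b - a := by linarith
  refine ⟨C ((b - r) / (b - a)), C ((a - r) / (b - a)), sos_const (div_nonneg (by linarith) (by linarith)),
    sos_const (div_nonneg (by linarith) (by linarith)), by simp, by simp, ?_⟩
  exact lin_decomp (by field_simp; ring) (by field_simp; ring)

lemma lin_decomp' {a b l m r : ℝ} (h1 : l - m = -1) (h2 : m * b - l * a = r) :
    C r - X = (X - C a) * C l + (C b - X) * C m := by
  have h : (X - C a) * C l + (C b - X) * C m = C (l - m) * X + C (m * b - l * a) := by
    simp only [C_sub, C_mul]; ring
  rw [h, h1, h2, map_neg, map_one]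
  ring

lemma orep_lin_right {a b r : ℝ} (hab : a < b) (hr : b < r) : ORep a b 1 (C r - X) := by
  have hba : (0:ℝ) < b - a := by linarith
  refine ⟨C ((r - b) / (b - a)), C ((r - a) / (b - a)),
    sos_const (div_nonneg (by linarith) (by linarith)),
    sos_const (div_nonneg (by linarith) (by linarith)), by simp, by simp, ?_⟩
  exact lin_decomp' (by field_simp; ring) (by field_simp; ring)

lemma rep_quad {a b : ℝ} (c k : ℝ) (hk : 0 ≤ k) : Rep a b 2 ((X - C c) ^ 2 + C k) := by
  refine ⟨(X - C c) ^ 2 + C k, 0, ?_, sos_zero, ?_, Or.inl rfl, by ring⟩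
  · have : C k = (C (Real.sqrt k)) ^ 2 := by rw [← map_pow, Real.sq_sqrt hk]
    rw [this]
    exact sos_add (sos_sq _) (sos_sq _)
  · refine le_trans (natDegree_add_le _ _) ?_
    simp [natDegree_pow, natDegree_X_sub_C]



lemma nonneg_on_closure {g : Polynomial ℝ} {s : Set ℝ} (h : ∀ x ∈ s, 0 ≤ g.eval x) :
    ∀ x ∈ closure s, 0 ≤ g.eval x := by
  have hcl : IsClosed {y : ℝ | 0 ≤ g.eval y} :=
    isClosed_le continuous_const (g.continuous_aeval)
  exact fun x hx => hcl.closure_subset_iff.2 h hx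

lemma double_root_dvd {a b r : ℝ} {p : Polynomial ℝ} (hr : r ∈ Set.Ioo a b)
    (hnn : ∀ x ∈ Set.Icc a b, 0 ≤ p.eval x) (h0 : p.eval r = 0) :
    (X - C r) ^ 2 ∣ p := by
  have hmin : IsLocalMin (fun x => p.eval x) r := by
    have hm : Set.Icc a b ∈ nhds r := Icc_mem_nhds hr.1 hr.2
    filter_upwards [hm] with x hx
    simpa [h0] using hnn x hx
  have hder : p.derivative.eval r = 0 := by
    have h := hmin.deriv_eq_zero
    rwa [Polynomial.deriv] at h
  obtain ⟨g, hg⟩ := dvd_iff_isRoot.2 h0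
  have hgr : g.eval r = 0 := by
    have hd : p.derivative = g + (X - C r) * g.derivative := by
      rw [hg, derivative_mul]
      simp
    rw [hd] at hder
    simpa using hder
  obtain ⟨h, hh⟩ := dvd_iff_isRoot.2 hgr
  exact ⟨h, by rw [hg, hh]; ring⟩


lemma C_sub_X_ne_zero (b : ℝ) : (C b - X : Polynomial ℝ) ≠ 0 := fun h => by
  have := natDegree_C_sub_X b
  rw [h] at this
  simp at this

lemma cof_nonneg_at_a {a b : ℝ} (hab : a < b) {p g : Polynomial ℝ} (hg : p = (X - C a) * g)
    (hnn : ∀ x ∈ Set.Icc a b, 0 ≤ p.eval x) : ∀ x ∈ Set.Icc a b, 0 ≤ g.eval x := by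
  have h1 : ∀ x ∈ Set.Ioc a b, 0 ≤ g.eval x := by
    intro x hx
    have h := hnn x (Set.Ioc_subset_Icc_self hx)
    rw [hg, eval_mul] at h
    simp only [eval_sub, eval_X, eval_C] at h
    nlinarith [hx.1]
  have h2 := nonneg_on_closure h1
  rwa [closure_Ioc hab.ne] at h2

lemma cof_nonneg_at_b {a b : ℝ} (hab : a < b) {p g : Polynomial ℝ} (hg : p = (C b - X) * g)
    (hnn : ∀ x ∈ Set.Icc a b, 0 ≤ p.eval x) : ∀ x ∈ Set.Icc a b, 0 ≤ g.eval x := by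
  have h1 : ∀ x ∈ Set.Ico a b, 0 ≤ g.eval x := by
    intro x hx
    have h := hnn x (Set.Ico_subset_Icc_self hx)
    rw [hg, eval_mul] at h
    simp only [eval_sub, eval_X, eval_C] at h
    nlinarith [hx.2]
  have h2 := nonneg_on_closure h1
  rwa [closure_Ico hab.ne] at h2

lemma cof_nonneg_interior {a b r : ℝ} (_hab : a < b) (hr : r ∈ Set.Ioo a b)
    {p g : Polynomial ℝ} (hg : p = (X - C r) ^ 2 * g)
    (hnn : ∀ x ∈ Set.Icc a b, 0 ≤ p.eval x) : ∀ x ∈ Set.Icc a b, 0 ≤ g.eval x := by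
  have hxne : ∀ x ∈ Set.Icc a b, x ≠ r → 0 ≤ g.eval x := by
    intro x hx hne
    have h := hnn x hx
    rw [hg, eval_mul, eval_pow] at h
    simp only [eval_sub, eval_X, eval_C] at h
    have hsr : 0 < (x - r) ^ 2 :=
      lt_of_le_of_ne (sq_nonneg _) (Ne.symm (pow_ne_zero 2 (sub_ne_zero.2 hne)))
    nlinarith
  intro x hx
  by_cases hxr : x = r
  · subst hxr
    have h1 : ∀ y ∈ Set.Ioc x b, 0 ≤ g.eval y := by
      intro y hy
      exact hxne y ⟨le_of_lt (lt_trans hr.1 hy.1), hy.2⟩ (ne_of_gt hy.1)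
    have h2 := nonneg_on_closure h1
    rw [closure_Ioc (ne_of_lt hr.2)] at h2
    exact h2 x (Set.left_mem_Icc.2 hr.2.le)
  · exact hxne x hx hxr

lemma cof_nonneg_left {a b r : ℝ} (hr : r < a) {p g : Polynomial ℝ}
    (hg : p = (X - C r) * g) (hpos : ∀ x ∈ Set.Icc a b, 0 < p.eval x) :
    ∀ x ∈ Set.Icc a b, 0 ≤ g.eval x := by
  intro x hx
  have h := hpos x hx
  rw [hg, eval_mul] at h
  simp only [eval_sub, eval_X, eval_C] at h
  nlinarith [hx.1]

lemma cof_nonneg_right {a b r : ℝ} (hr : b < r) {p g : Polynomial ℝ}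
    (hg : p = (C r - X) * g) (hpos : ∀ x ∈ Set.Icc a b, 0 < p.eval x) :
    ∀ x ∈ Set.Icc a b, 0 ≤ g.eval x := by
  intro x hx
  have h := hpos x hx
  rw [hg, eval_mul] at h
  simp only [eval_sub, eval_X, eval_C] at h
  nlinarith [hx.2]

lemma cof_nonneg_quad {a b : ℝ} {p Q g : Polynomial ℝ} (hg : p = Q * g)
    (hQpos : ∀ x : ℝ, 0 < Q.eval x) (hnn : ∀ x ∈ Set.Icc a b, 0 ≤ p.eval x) :
    ∀ x ∈ Set.Icc a b, 0 ≤ g.eval x := by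
  intro x hx
  have h := hnn x hx
  rw [hg, eval_mul] at h
  have := hQpos x
  nlinarith

lemma main (a b : ℝ) (hab : a < b) (n : ℕ) :
    ∀ p : Polynomial ℝ, p ≠ 0 → p.natDegree = n →
      (∀ x ∈ Set.Icc a b, 0 ≤ p.eval x) →
      (Even n → Rep a b n p) ∧ (¬Even n → ORep a b n p) := by
  induction n using Nat.strong_induction_on with
  | _ n IH =>
  intro p hp0 hdeg hnn
  by_cases hroot : ∃ r ∈ Set.Icc a b, p.eval r = 0
  · obtain ⟨r, hr, h0⟩ := hroot
    rcases eq_or_lt_of_le hr.1 with h1 | h1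
    · -- a = r
      obtain ⟨g, hg⟩ := dvd_iff_isRoot.2 (show p.IsRoot a by rw [h1]; exact h0)
      have hg0 : g ≠ 0 := fun h => hp0 (by rw [hg, h, mul_zero])
      have hmn : n = g.natDegree + 1 := by
        rw [← hdeg, hg, natDegree_mul (X_sub_C_ne_zero a) hg0, natDegree_X_sub_C]
        omega
      have hgnn := cof_nonneg_at_a hab hg hnn
      have hIH := IH g.natDegree (by omega) g hg0 rfl hgnn
      constructor
      · intro hev
        have hodd : ¬ Even g.natDegree := by
          rw [Nat.even_iff] at *
          omega
        have h := orep_mul_orep (orep_Xa a b) (hIH.2 hodd)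
        rw [← hg] at h
        rwa [show 1 + g.natDegree = n from by omega] at h
      · intro hodd
        have hevg : Even g.natDegree := by
          rw [Nat.even_iff] at *
          omega
        have h := rep_mul_orep (hIH.1 hevg) (orep_Xa a b)
        rw [mul_comm, ← hg] at h
        rwa [show g.natDegree + 1 = n from by omega] at h
    · rcases eq_or_lt_of_le hr.2 with h2 | h2
      · -- r = b
        obtain ⟨g, hgg⟩ := dvd_iff_isRoot.2 (show p.IsRoot b by rw [← h2]; exact h0)
        have hg : p = (C b - X) * (-g) := by rw [hgg]; ring
        have hg0 : (-g : Polynomial ℝ) ≠ 0 := fun h => hp0 (by rw [hg, h, mul_zero])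
        have hmn : n = (-g : Polynomial ℝ).natDegree + 1 := by
          rw [← hdeg, hg, natDegree_mul (C_sub_X_ne_zero b) hg0, natDegree_C_sub_X]
          omega
        have hgnn := cof_nonneg_at_b hab hg hnn
        have hIH := IH (-g : Polynomial ℝ).natDegree (by omega) (-g) hg0 rfl hgnn
        constructor
        · intro hev
          have hodd : ¬ Even (-g : Polynomial ℝ).natDegree := by
            rw [Nat.even_iff] at *
            omega
          have h := orep_mul_orep (orep_bX a b) (hIH.2 hodd)
          rw [← hg] at h
          rwa [show 1 + (-g : Polynomial ℝ).natDegree = n from by omega] at h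
        · intro hodd
          have hevg : Even (-g : Polynomial ℝ).natDegree := by
            rw [Nat.even_iff] at *
            omega
          have h := rep_mul_orep (hIH.1 hevg) (orep_bX a b)
          rw [mul_comm, ← hg] at h
          rwa [show (-g : Polynomial ℝ).natDegree + 1 = n from by omega] at h
      · -- r interior
        obtain ⟨g, hg⟩ := double_root_dvd ⟨h1, h2⟩ hnn h0
        have hg0 : g ≠ 0 := fun h => hp0 (by rw [hg, h, mul_zero])
        have hsq0 : ((X - C r) ^ 2 : Polynomial ℝ) ≠ 0 := pow_ne_zero _ (X_sub_C_ne_zero r)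
        have hmn : n = g.natDegree + 2 := by
          rw [← hdeg, hg, natDegree_mul hsq0 hg0, natDegree_pow, natDegree_X_sub_C]
          omega
        have hgnn := cof_nonneg_interior hab ⟨h1, h2⟩ hg hnn
        have hIH := IH g.natDegree (by omega) g hg0 rfl hgnn
        have hrep2 : Rep a b 2 ((X - C r) ^ 2) := by
          have h := rep_sq (a := a) (b := b) (k := 1) (f := X - C r)
            (le_of_eq (natDegree_X_sub_C r))
          simpa using h
        constructor
        · intro hev
          have hevg : Even g.natDegree := by
            rw [Nat.even_iff] at *
            omega
          have h := rep_mul_rep hrep2 (hIH.1 hevg)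
          rw [← hg] at h
          rwa [show 2 + g.natDegree = n from by omega] at h
        · intro hodd
          have hoddg : ¬Even g.natDegree := by
            rw [Nat.even_iff] at *
            omega
          have h := rep_mul_orep hrep2 (hIH.2 hoddg)
          rw [← hg] at h
          rwa [show 2 + g.natDegree = n from by omega] at h
  · have hpos : ∀ x ∈ Set.Icc a b, 0 < p.eval x := by
      intro x hx
      rcases (hnn x hx).lt_or_eq with h | h
      · exact h
      · exact absurd ⟨x, hx, h.symm⟩ hroot
    rcases Nat.eq_zero_or_pos n with hn0 | hn0
    · subst hn0
      constructor
      · intro _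
        have hc : p = C (p.coeff 0) := eq_C_of_natDegree_eq_zero hdeg
        have h0c : 0 ≤ p.coeff 0 := by
          have h := hpos a (Set.left_mem_Icc.2 hab.le)
          rw [hc] at h
          simpa using h.le
        rw [hc]
        exact rep_const h0c 0
      · intro h
        exact absurd Even.zero h
    · obtain ⟨z, hz⟩ := IsAlgClosed.exists_aeval_eq_zero ℂ p
        ((natDegree_pos_iff_degree_pos.mp (by omega)).ne')
      by_cases him : z.im = 0
      · -- real root
        lift z to ℝ using him with r
        erw [aeval_ofReal, Complex.ofReal_eq_zero] at hz
        have hrne : r ∉ Set.Icc a b := fun h => (hpos r h).ne' hz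
        obtain ⟨g, hg⟩ := dvd_iff_isRoot.2 hz
        have hg0 : g ≠ 0 := fun h => hp0 (by rw [hg, h, mul_zero])
        rcases lt_or_ge r a with hra | hra
        · have hmn : n = g.natDegree + 1 := by
            rw [← hdeg, hg, natDegree_mul (X_sub_C_ne_zero r) hg0, natDegree_X_sub_C]
            omega
          have hgnn := cof_nonneg_left hra hg hpos
          have hIH := IH g.natDegree (by omega) g hg0 rfl hgnn
          constructor
          · intro hev
            have hodd : ¬ Even g.natDegree := by
              rw [Nat.even_iff] at *
              omega
            have h := orep_mul_orep (orep_lin_left hab hra) (hIH.2 hodd)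
            rw [← hg] at h
            rwa [show 1 + g.natDegree = n from by omega] at h
          · intro hodd
            have hevg : Even g.natDegree := by
              rw [Nat.even_iff] at *
              omega
            have h := rep_mul_orep (hIH.1 hevg) (orep_lin_left hab hra)
            rw [mul_comm, ← hg] at h
            rwa [show g.natDegree + 1 = n from by omega] at h
        · have hrb : b < r := by
            rcases lt_or_ge b r with h | h
            · exact h
            · exact absurd ⟨hra, h⟩ hrne
          have hg' : p = (C r - X) * (-g) := by rw [hg]; ring
          have hg0' : (-g : Polynomial ℝ) ≠ 0 := fun h => hp0 (by rw [hg', h, mul_zero])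
          have hmn : n = (-g : Polynomial ℝ).natDegree + 1 := by
            rw [← hdeg, hg', natDegree_mul (C_sub_X_ne_zero r) hg0', natDegree_C_sub_X]
            omega
          have hgnn := cof_nonneg_right hrb hg' hpos
          have hIH := IH (-g : Polynomial ℝ).natDegree (by omega) (-g) hg0' rfl hgnn
          constructor
          · intro hev
            have hodd : ¬ Even (-g : Polynomial ℝ).natDegree := by
              rw [Nat.even_iff] at *
              omega
            have h := orep_mul_orep (orep_lin_right hab hrb) (hIH.2 hodd)
            rw [← hg'] at h
            rwa [show 1 + (-g : Polynomial ℝ).natDegree = n from by omega] at h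
          · intro hodd
            have hevg : Even (-g : Polynomial ℝ).natDegree := by
              rw [Nat.even_iff] at *
              omega
            have h := rep_mul_orep (hIH.1 hevg) (orep_lin_right hab hrb)
            rw [mul_comm, ← hg'] at h
            rwa [show (-g : Polynomial ℝ).natDegree + 1 = n from by omega] at h
      · -- non-real root: quadratic factor
        obtain ⟨g, hg⟩ := p.quadratic_dvd_of_aeval_eq_zero_im_ne_zero hz him
        have hQ : (X ^ 2 - C (2 * z.re) * X + C (‖z‖ ^ 2) : Polynomial ℝ)
            = (X - C z.re) ^ 2 + C (z.im ^ 2) := by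
          have hn2 : ‖z‖ ^ 2 = z.re ^ 2 + z.im ^ 2 := by
            rw [Complex.sq_norm, Complex.normSq_apply]
            ring
          rw [hn2]
          simp only [C_add, C_mul, map_ofNat, map_pow]
          ring
        rw [hQ] at hg
        set Q : Polynomial ℝ := (X - C z.re) ^ 2 + C (z.im ^ 2) with hQdef
        have hQpos : ∀ x : ℝ, 0 < Q.eval x := by
          intro x
          simp only [hQdef, eval_add, eval_pow, eval_sub, eval_X, eval_C]
          have him2 : (0:ℝ) < z.im ^ 2 := by positivity
          nlinarith [sq_nonneg (x - z.re)]
        have hQ0 : Q ≠ 0 := fun h => by simpa [h] using (hQpos 0)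
        have hg0 : g ≠ 0 := fun h => hp0 (by rw [hg, h, mul_zero])
        have hQdeg : Q.natDegree = 2 := by
          rw [hQdef]
          compute_degree!
        have hmn : n = g.natDegree + 2 := by
          rw [← hdeg, hg, natDegree_mul hQ0 hg0, hQdeg]
          omega
        have hgnn : ∀ x ∈ Set.Icc a b, 0 ≤ g.eval x := cof_nonneg_quad hg hQpos hnn
        have hIH := IH g.natDegree (by omega) g hg0 rfl hgnn
        have hrep2 : Rep a b 2 Q := by
          rw [hQdef]
          exact rep_quad z.re (z.im ^ 2) (sq_nonneg _)
        constructor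
        · intro hev
          have hevg : Even g.natDegree := by
            rw [Nat.even_iff] at *
            omega
          have h := rep_mul_rep hrep2 (hIH.1 hevg)
          rw [← hg] at h
          rwa [show 2 + g.natDegree = n from by omega] at h
        · intro hodd
          have hoddg : ¬Even g.natDegree := by
            rw [Nat.even_iff] at *
            omega
          have h := rep_mul_orep hrep2 (hIH.2 hoddg)
          rw [← hg] at h
          rwa [show 2 + g.natDegree = n from by omega] at h

end ML

/-- Markov–Lukács representation (even-degree case): for `a < b`, a polynomial `p` of
degree `2d` is nonnegative on `[a, b]` iff `p = s + (x−a)(b−x)·t` with `s, t` sums of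
squares, `deg s ≤ 2d`, `deg t ≤ 2d − 2`. -/
theorem stmt10 (a b : ℝ) (hab : a < b) (d : ℕ) (p : Polynomial ℝ)
    (hdeg : p.natDegree = 2 * d) :
    (∀ x ∈ Set.Icc a b, 0 ≤ p.eval x) ↔
      ∃ s t : Polynomial ℝ, IsSumOfSquaresPoly s ∧ IsSumOfSquaresPoly t ∧
        s.natDegree ≤ 2 * d ∧ t.natDegree ≤ 2 * d - 2 ∧
        p = s + (X - C a) * (C b - X) * t := by
  constructor
  · intro hnn
    by_cases hp0 : p = 0
    · exact ⟨0, 0, ML.sos_zero, ML.sos_zero, by simp, by simp, by rw [hp0]; ring⟩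
    · obtain ⟨s, t, hs, ht, hds, hdt, hrep⟩ :=
        (ML.main a b hab (2 * d) p hp0 hdeg hnn).1 (even_two_mul d)
      refine ⟨s, t, hs, ht, hds, ?_, hrep⟩
      rcases hdt with rfl | h
      · simp
      · omega
  · rintro ⟨s, t, hs, ht, _, _, rfl⟩ x hx
    rw [eval_add, eval_mul, eval_mul]
    simp only [eval_sub, eval_X, eval_C]
    have h1 := ML.sos_eval_nonneg hs x
    have h2 := ML.sos_eval_nonneg ht x
    have h3 : 0 ≤ x - a := by linarith [hx.1]
    have h4 : 0 ≤ b - x := by linarith [hx.2]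
    positivity
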